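/- arXiv:1609.07180 — 3 statements merged into one kernel-verified Lean document; each statement's English description precedes it below -/
import Mathlib

section
/- The difference between the true and approximate inverse covariance matrices satisfies Γ_cond^{-1} − Γ̂_cond^{-1} = μ Lᵀ (Σ_{j=k+1}^n λ_j v_j v_jᵀ) L; in particular this difference is positive semidefinite. -/
open Matrix MeasureTheory ProbabilityTheory Finset

noncomputable section

section aux

variable {n : ℕ}

lemma psd_smul {M : Matrix (Fin n) (Fin n) ℝ} (hM : M.PosSemidef) {c : ℝ} (hc : 0 ≤ c) :
    (c • M).PosSemidef := by
  refine posSemidef_iff_dotProduct_mulVec.mpr ⟨?_, fun x => ?_⟩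
  · show (c • M)ᴴ = c • M
    rw [conjTranspose_smul, star_trivial, hM.1]
  · rw [smul_mulVec, dotProduct_smul, smul_eq_mul]
    exact mul_nonneg hc (hM.dotProduct_mulVec_nonneg x)

lemma pd_smul {M : Matrix (Fin n) (Fin n) ℝ} (hM : M.PosDef) {c : ℝ} (hc : 0 < c) :
    (c • M).PosDef := by
  refine posDef_iff_dotProduct_mulVec.mpr ⟨?_, fun x hx => ?_⟩
  · show (c • M)ᴴ = c • M
    rw [conjTranspose_smul, star_trivial, hM.1]
  · rw [smul_mulVec, dotProduct_smul, smul_eq_mul]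
    exact mul_pos hc (hM.dotProduct_mulVec_pos hx)

lemma pd_one : (1 : Matrix (Fin n) (Fin n) ℝ).PosDef := by
  refine posDef_iff_dotProduct_mulVec.mpr ⟨isHermitian_one, fun x hx => ?_⟩
  rw [one_mulVec]
  exact dotProduct_star_self_pos_iff.mpr hx

lemma psd_vecMulVec (w : Fin n → ℝ) : (vecMulVec w w).PosSemidef := by
  refine posSemidef_iff_dotProduct_mulVec.mpr ⟨?_, fun x => ?_⟩
  · show (vecMulVec w w)ᴴ = vecMulVec w w
    ext i j
    simp [vecMulVec_apply, conjTranspose_apply, mul_comm]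
  · have h : vecMulVec w w *ᵥ x = (w ⬝ᵥ x) • w := by
      ext i
      simp only [mulVec, dotProduct, vecMulVec_apply, Pi.smul_apply, smul_eq_mul,
        Finset.sum_mul]
      exact Finset.sum_congr rfl fun j _ => by ring
    rw [h, dotProduct_smul, smul_eq_mul, star_trivial]
    have : x ⬝ᵥ w = w ⬝ᵥ x := dotProduct_comm x w
    rw [this]
    exact mul_self_nonneg _
lemma psd_sum (s : Finset (Fin n)) (lam : Fin n → ℝ) (hlam : ∀ j, 0 ≤ lam j)
    (v : Fin n → Fin n → ℝ) :
    (∑ j ∈ s, lam j • vecMulVec (v j) (v j)).PosSemidef := by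
  classical
  refine Finset.sum_induction _ (fun M : Matrix (Fin n) (Fin n) ℝ => M.PosSemidef)
    (fun a b ha hb => ha.add hb) ?_ (fun j _ => ?_)
  · exact (Matrix.PosSemidef.zero : Matrix.PosSemidef (0 : Matrix (Fin n) (Fin n) ℝ))
  · exact psd_smul (psd_vecMulVec (v j)) (hlam j)

lemma pd_transpose_mul_self {L : Matrix (Fin n) (Fin n) ℝ} (hL : IsUnit L.det) :
    (Lᵀ * L).PosDef := by
  refine posDef_iff_dotProduct_mulVec.mpr ⟨?_, fun x hx => ?_⟩
  · show (Lᵀ * L)ᴴ = Lᵀ * L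
    rw [conjTranspose_mul, conjTranspose_eq_transpose_of_trivial,
      conjTranspose_eq_transpose_of_trivial, transpose_transpose]
  · have hinj : Function.Injective (L.mulVec) := mulVec_injective_iff_isUnit.mpr ((Matrix.isUnit_iff_isUnit_det _).mpr hL)
    have hLx : L *ᵥ x ≠ 0 := by
      intro h
      exact hx (hinj (by simpa using h))
    rw [← mulVec_mulVec, dotProduct_mulVec, star_trivial, ← transpose_transpose L,
      vecMul_transpose, transpose_transpose]
    have := dotProduct_star_self_pos_iff.mpr hLx
    simpa using this

end aux

theorem stmt5
    (m n : ℕ) (hm : 0 < m) (hn : 0 < n)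
    (A : Matrix (Fin m) (Fin n) ℝ) (L : Matrix (Fin n) (Fin n) ℝ) (hL : IsUnit L.det)
    (μ σ : ℝ) (hμ : 0 < μ) (hσ : 0 < σ)
    (v : Fin n → Fin n → ℝ) (lam : Fin n → ℝ)
    (horth : ∀ i j, v i ⬝ᵥ v j = if i = j then (1 : ℝ) else 0)
    (hlam_nonneg : ∀ j, 0 ≤ lam j) (hlam_anti : Antitone lam)
    (hHdecomp : (L⁻¹)ᵀ * Aᵀ * A * L⁻¹ = ∑ j, lam j • vecMulVec (v j) (v j))
    (k : ℕ) (hk : k ≤ n)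
    (Γcond : Matrix (Fin n) (Fin n) ℝ)
    (hΓcond : Γcond = (μ • (Aᵀ * A) + σ • (Lᵀ * L))⁻¹)
    (Γhat : Matrix (Fin n) (Fin n) ℝ)
    (hΓhat : Γhat = L⁻¹ * (σ • (1 : Matrix (Fin n) (Fin n) ℝ) +
        μ • ∑ j ∈ Finset.univ.filter (fun j : Fin n => (j : ℕ) < k),
          lam j • vecMulVec (v j) (v j))⁻¹ * (L⁻¹)ᵀ)
    :
    Γcond⁻¹ - Γhat⁻¹ =
      μ • (Lᵀ * (∑ j ∈ Finset.univ.filter (fun j : Fin n => k ≤ (j : ℕ)), lam j • vecMulVec (v j) (v j)) * L) ∧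
    (Γcond⁻¹ - Γhat⁻¹).PosSemidef := by
  classical
  set Slo := ∑ j ∈ Finset.univ.filter (fun j : Fin n => (j : ℕ) < k),
      lam j • vecMulVec (v j) (v j) with hSlo
  set Shi := ∑ j ∈ Finset.univ.filter (fun j : Fin n => k ≤ (j : ℕ)),
      lam j • vecMulVec (v j) (v j) with hShi
  -- split the sum
  have hsplit : (∑ j, lam j • vecMulVec (v j) (v j)) = Slo + Shi := by
    rw [hSlo, hShi, ← Finset.sum_filter_add_sum_filter_not Finset.univ
      (fun j : Fin n => (j : ℕ) < k)]
    congr 1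
    apply Finset.sum_congr _ (fun _ _ => rfl)
    congr 1
    ext j
    simp [not_lt]
  have h2 : L⁻¹ * L = 1 := nonsing_inv_mul _ hL
  have h2' : L * L⁻¹ = 1 := mul_nonsing_inv _ hL
  have h1 : Lᵀ * (L⁻¹)ᵀ = 1 := by rw [← transpose_mul, h2, transpose_one]
  -- AᵀA = Lᵀ H L
  have hAA : Aᵀ * A = Lᵀ * (Slo + Shi) * L := by
    rw [← hsplit, ← hHdecomp]
    calc Aᵀ * A = (Lᵀ * (L⁻¹)ᵀ) * (Aᵀ * A) * (L⁻¹ * L) := by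
          rw [h1, h2, Matrix.one_mul, Matrix.mul_one]
      _ = Lᵀ * ((L⁻¹)ᵀ * Aᵀ * A * L⁻¹) * L := by
          simp only [Matrix.mul_assoc]
  -- positive definiteness facts
  have hpsdAA : (Aᵀ * A).PosSemidef := by
    have := posSemidef_conjTranspose_mul_self A
    rwa [conjTranspose_eq_transpose_of_trivial] at this
  have hpdLL : (Lᵀ * L).PosDef := pd_transpose_mul_self hL
  have hpdB0 : (μ • (Aᵀ * A) + σ • (Lᵀ * L)).PosDef :=
    Matrix.PosDef.posSemidef_add (psd_smul hpsdAA hμ.le) (pd_smul hpdLL hσ)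
  have hpsdSlo : Slo.PosSemidef := psd_sum _ lam hlam_nonneg v
  have hpsdShi : Shi.PosSemidef := psd_sum _ lam hlam_nonneg v
  have hpdB : (σ • (1 : Matrix (Fin n) (Fin n) ℝ) + μ • Slo).PosDef :=
    Matrix.PosDef.add_posSemidef (pd_smul pd_one hσ) (psd_smul hpsdSlo hμ.le)
  set B := σ • (1 : Matrix (Fin n) (Fin n) ℝ) + μ • Slo with hB
  -- invert Γcond
  have hΓcondInv : Γcond⁻¹ = μ • (Aᵀ * A) + σ • (Lᵀ * L) := by
    rw [hΓcond, nonsing_inv_nonsing_inv _ hpdB0.det_pos.ne'.isUnit]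
  -- invert Γhat
  have hLtdet : IsUnit Lᵀ.det := by rwa [det_transpose]
  have hΓhatInv : Γhat⁻¹ = Lᵀ * B * L := by
    rw [hΓhat, Matrix.mul_inv_rev, Matrix.mul_inv_rev,
      nonsing_inv_nonsing_inv _ hL, nonsing_inv_nonsing_inv _ hpdB.det_pos.ne'.isUnit,
      transpose_nonsing_inv, nonsing_inv_nonsing_inv _ hLtdet, Matrix.mul_assoc]
  -- the identity
  have hmain : Γcond⁻¹ - Γhat⁻¹ = μ • (Lᵀ * Shi * L) := by
    rw [hΓcondInv, hΓhatInv, hAA, hB]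
    simp only [Matrix.mul_add, Matrix.add_mul, Matrix.mul_smul, Matrix.smul_mul,
      Matrix.mul_one, smul_add]
    abel
  refine ⟨hmain, ?_⟩
  rw [hmain]
  have hcong : (Lᵀ * Shi * L).PosSemidef := by
    have := hpsdShi.conjTranspose_mul_mul_same L
    rwa [conjTranspose_eq_transpose_of_trivial] at this
  exact psd_smul hcong hμ.le
end
end

section
/- (Theorem 1, expectation) For every x ∈ ℝ^n, the expected value of the acceptance ratio under the proposal distribution satisfies e_η := ∫_{ℝ^n} η(z, x) g(z) dz = 1/(N₁ · w(x)). -/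
open Matrix MeasureTheory ProbabilityTheory Finset

noncomputable section

lemma gauss1 (d e s : ℝ) (hd : 0 ≤ d) (he : 0 < e) :
    ∫ y : ℝ, Real.exp (-(1/2)*(d*y^2 + e*(y-s)^2))
      = Real.sqrt (2*Real.pi/(d+e)) * Real.exp (-(1/2)*(d*e*s^2/(d+e))) := by
  have hde : 0 < d + e := by linarith
  set a := (d+e)/2 with ha_def
  have ha : 0 < a := by positivity
  set mm := e*s/(d+e) with hm_def
  have key : ∀ y : ℝ, (-(1/2)*(d*y^2 + e*(y-s)^2)) = (-(a*(y-mm)^2)) + (-(1/2)*(d*e*s^2/(d+e))) := by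
    intro y
    rw [ha_def, hm_def]; field_simp
    ring
  simp_rw [key, Real.exp_add, integral_mul_const]
  have h2 : (∫ y:ℝ, Real.exp (-(a*(y-mm)^2))) = ∫ y:ℝ, Real.exp (-(a*y^2)) :=
    integral_sub_right_eq_self (fun y => Real.exp (-(a*y^2))) mm
  rw [h2]
  have h3 : (∫ y:ℝ, Real.exp (-(a*y^2))) = Real.sqrt (Real.pi / a) := by
    simpa [neg_mul] using integral_gaussian a
  rw [h3]
  congr 1
  rw [ha_def]
  congr 1
  field_simp

lemma quadform {n : ℕ} (P Q : Matrix (Fin n) (Fin n) ℝ) (y : Fin n → ℝ) :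
    (P *ᵥ y) ⬝ᵥ (Q *ᵥ (P *ᵥ y)) = y ⬝ᵥ ((Pᵀ * Q * P) *ᵥ y) := by
  rw [mulVec_mulVec, dotProduct_mulVec, ← vecMul_transpose, vecMul_vecMul,
    dotProduct_mulVec, mul_assoc]

lemma diagquad {n : ℕ} (d : Fin n → ℝ) (y : Fin n → ℝ) :
    y ⬝ᵥ (diagonal d *ᵥ y) = ∑ j, d j * (y j)^2 := by
  simp [dotProduct, mulVec_diagonal, sq]
  exact Finset.sum_congr rfl fun j _ => by ring


lemma cov {n : ℕ} (T : Matrix (Fin n) (Fin n) ℝ) (hT : T.det ≠ 0)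
    (F : (Fin n → ℝ) → ℝ) (hF : Continuous F) :
    ∫ z : Fin n → ℝ, F z = |T.det| * ∫ y : Fin n → ℝ, F (T *ᵥ y) := by
  have hmeas : Measurable (Matrix.toLin' T) :=
    (LinearMap.continuous_on_pi _).measurable
  have h1 : ∫ z, F z ∂(Measure.map (Matrix.toLin' T) volume) = ∫ y, F (T *ᵥ y) := by
    rw [integral_map hmeas.aemeasurable hF.aestronglyMeasurable]
    simp [Matrix.toLin'_apply]
  rw [Real.map_matrix_volume_pi_eq_smul_volume_pi hT, integral_smul_measure] at h1
  rw [ENNReal.toReal_ofReal (by positivity)] at h1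
  rw [← h1, smul_eq_mul, ← mul_assoc, abs_inv, mul_inv_cancel₀ (by simpa using hT), one_mul]
  -- |det T| * (|det T|⁻¹ • ∫F) = ∫ F


lemma diag_conj {n : ℕ} (v : Fin n → Fin n → ℝ) (wv : Fin n → ℝ) :
    (Matrix.of v)ᵀ * Matrix.diagonal wv * (Matrix.of v) = ∑ j, wv j • vecMulVec (v j) (v j) := by
  ext i l
  simp only [Matrix.mul_apply, Matrix.transpose_apply, Matrix.of_apply, Matrix.diagonal_apply,
    Matrix.sum_apply, Matrix.smul_apply, vecMulVec_apply, smul_eq_mul, mul_ite, ite_mul,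
    mul_zero, zero_mul, Finset.sum_ite_eq, Finset.sum_ite_eq', Finset.mem_univ, if_true]
  exact Finset.sum_congr rfl fun j _ => by ring

lemma sqrt_prod {ι : Type*} (s : Finset ι) (f : ι → ℝ) (h : ∀ i ∈ s, 0 ≤ f i) :
    Real.sqrt (∏ i ∈ s, f i) = ∏ i ∈ s, Real.sqrt (f i) := by
  induction s using Finset.cons_induction with
  | empty => simp
  | cons a s ha ih =>
      rw [Finset.prod_cons, Finset.prod_cons,
        Real.sqrt_mul (h a (Finset.mem_cons_self a s)),
        ih (fun i hi => h i (Finset.mem_cons_of_mem hi))]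

lemma algkey (a t p q E : ℝ) (ha : a ≠ 0) (ht : t ≠ 0) :
    a⁻¹ * (t⁻¹ * (a * p) * (t * q⁻¹ * E)) = E * (p / q) := by
  calc a⁻¹ * (t⁻¹ * (a * p) * (t * q⁻¹ * E))
      = (a⁻¹ * a) * ((t⁻¹ * t) * (p * q⁻¹ * E)) := by ring
    _ = E * (p / q) := by
        rw [inv_mul_cancel₀ ha, inv_mul_cancel₀ ht, one_mul, one_mul, div_eq_mul_inv]
        ring

lemma mcancel {n : ℕ} {X Y : Matrix (Fin n) (Fin n) ℝ} (h : X * Y = 1)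
    (Z : Matrix (Fin n) (Fin n) ℝ) : X * (Y * Z) = Z := by
  rw [← Matrix.mul_assoc, h, one_mul]

set_option maxHeartbeats 2000000 in
theorem stmt10
    (m n : ℕ) (hm : 0 < m) (hn : 0 < n)
    (A : Matrix (Fin m) (Fin n) ℝ) (L : Matrix (Fin n) (Fin n) ℝ) (hL : IsUnit L.det)
    (μ σ : ℝ) (hμ : 0 < μ) (hσ : 0 < σ)
    (b : Fin m → ℝ)
    (v : Fin n → Fin n → ℝ) (lam : Fin n → ℝ)
    (horth : ∀ i j, v i ⬝ᵥ v j = if i = j then (1 : ℝ) else 0)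
    (hlam_nonneg : ∀ j, 0 ≤ lam j) (hlam_anti : Antitone lam)
    (hHdecomp : (L⁻¹)ᵀ * Aᵀ * A * L⁻¹ = ∑ j, lam j • vecMulVec (v j) (v j))
    (k : ℕ) (hk : k ≤ n)
    (Γcond : Matrix (Fin n) (Fin n) ℝ)
    (hΓcond : Γcond = (μ • (Aᵀ * A) + σ • (Lᵀ * L))⁻¹)
    (Γhat : Matrix (Fin n) (Fin n) ℝ)
    (hΓhat : Γhat = L⁻¹ * (σ • (1 : Matrix (Fin n) (Fin n) ℝ) +
        μ • ∑ j ∈ Finset.univ.filter (fun j : Fin n => (j : ℕ) < k),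
          lam j • vecMulVec (v j) (v j))⁻¹ * (L⁻¹)ᵀ)
    (xhat : Fin n → ℝ) (hxhat : xhat = μ • (Γhat *ᵥ (Aᵀ *ᵥ b)))
    (w : (Fin n → ℝ) → ℝ)
    (hw : ∀ x, w x = Real.exp (-(1/2) * (x ⬝ᵥ ((Γcond⁻¹ - Γhat⁻¹) *ᵥ x))))
    (η : (Fin n → ℝ) → (Fin n → ℝ) → ℝ)
    (hη : ∀ z x, η z x = w z / w x)
    (gfun : (Fin n → ℝ) → ℝ)
    (hgfun : ∀ x, gfun x = (2 * Real.pi) ^ (-(n : ℝ) / 2) * Γhat.det ^ (-(1 : ℝ) / 2) *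
        Real.exp (-(1/2) * ((x - xhat) ⬝ᵥ (Γhat⁻¹ *ᵥ (x - xhat)))))
    (N : ℕ → ℝ)
    (hN : ∀ ℓ : ℕ, N ℓ = Real.exp ((μ ^ 2 / (2 * σ)) *
        ∑ j ∈ Finset.univ.filter (fun j : Fin n => k ≤ (j : ℕ)),
          (((ℓ : ℝ) * μ * lam j) / ((ℓ : ℝ) * μ * lam j + σ)) *
            (b ⬝ᵥ (A *ᵥ (L⁻¹ *ᵥ v j))) ^ 2) *
      ∏ j ∈ Finset.univ.filter (fun j : Fin n => k ≤ (j : ℕ)),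
        Real.sqrt (1 + (ℓ : ℝ) * μ * lam j / σ))
    :
    ∀ x : Fin n → ℝ,
      (∫ z : Fin n → ℝ, η z x * gfun z) = 1 / (N 1 * w x) := by
  classical
  set V : Matrix (Fin n) (Fin n) ℝ := Matrix.of v with hV
  have hVVt : V * Vᵀ = 1 := by
    ext i j
    simpa [hV, Matrix.mul_apply, Matrix.one_apply, dotProduct] using horth i j
  have hVtV : Vᵀ * V = 1 := mul_eq_one_comm.mp hVVt
  have hdetV2 : V.det * V.det = 1 := by
    have := congrArg Matrix.det hVVt
    simpa [Matrix.det_mul, Matrix.det_transpose] using this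
  have habsdetV : |V.det| = 1 := by
    rcases mul_self_eq_one_iff.mp hdetV2 with h | h <;> simp [h]
  have hLdet : L.det ≠ 0 := hL.ne_zero
  have hLinv : L * L⁻¹ = 1 := Matrix.mul_nonsing_inv _ hL
  have hinvL : L⁻¹ * L = 1 := Matrix.nonsing_inv_mul _ hL
  have hLtinv : Lᵀ * (L⁻¹)ᵀ = 1 := by rw [← Matrix.transpose_mul, hinvL, Matrix.transpose_one]
  have hinvLt : (L⁻¹)ᵀ * Lᵀ = 1 := by rw [← Matrix.transpose_mul, hLinv, Matrix.transpose_one]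
  -- diagonal weight functions
  set dD : Fin n → ℝ := fun j => σ + μ * lam j with hdD
  set dK : Fin n → ℝ := fun j => if (j : ℕ) < k then σ + μ * lam j else σ with hdK
  set dd : Fin n → ℝ := fun j => if (j : ℕ) < k then 0 else μ * lam j with hdd
  have hdDpos : ∀ j, 0 < dD j := fun j => by
    have := hlam_nonneg j; show 0 < σ + μ * lam j; nlinarith
  have hdKpos : ∀ j, 0 < dK j := fun j => by
    have := hlam_nonneg j; show 0 < if (j:ℕ) < k then σ + μ * lam j else σ
    split <;> nlinarith
  have hddnn : ∀ j, 0 ≤ dd j := fun j => by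
    have := hlam_nonneg j; show 0 ≤ if (j:ℕ) < k then 0 else μ * lam j
    split
    · exact le_refl _
    · positivity
  -- sum identities
  have hfull : (∑ j, lam j • vecMulVec (v j) (v j)) = Vᵀ * Matrix.diagonal lam * V := by
    rw [hV]; exact (diag_conj v lam).symm
  have hfilt : (∑ j ∈ Finset.univ.filter (fun j : Fin n => (j:ℕ) < k),
      lam j • vecMulVec (v j) (v j))
      = Vᵀ * Matrix.diagonal (fun j : Fin n => if (j:ℕ) < k then lam j else 0) * V := by
    rw [hV, diag_conj v (fun j : Fin n => if (j:ℕ) < k then lam j else 0), Finset.sum_filter]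
    exact Finset.sum_congr rfl fun j _ => by split <;> simp
  have hAtA : Aᵀ * A = Lᵀ * (Vᵀ * Matrix.diagonal lam * V) * L := by
    have h1 : (L⁻¹)ᵀ * (Aᵀ * A) * L⁻¹ = Vᵀ * Matrix.diagonal lam * V := by
      rw [← hfull, ← hHdecomp]; simp only [Matrix.mul_assoc]
    calc Aᵀ * A = (Lᵀ * (L⁻¹)ᵀ) * (Aᵀ * A) * (L⁻¹ * L) := by
          rw [hLtinv, hinvL, one_mul, Matrix.mul_one]
      _ = Lᵀ * ((L⁻¹)ᵀ * (Aᵀ * A) * L⁻¹) * L := by simp only [Matrix.mul_assoc]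
      _ = Lᵀ * (Vᵀ * Matrix.diagonal lam * V) * L := by rw [h1]
  have hMmat : μ • (Aᵀ * A) + σ • (Lᵀ * L) = Lᵀ * (Vᵀ * Matrix.diagonal dD * V) * L := by
    have hd : Matrix.diagonal dD
        = μ • Matrix.diagonal lam + σ • (1 : Matrix (Fin n) (Fin n) ℝ) := by
      ext i j
      by_cases h : i = j <;>
        simp [Matrix.diagonal_apply, Matrix.one_apply, h, hdD] <;> ring
    rw [hd, hAtA]
    simp only [Matrix.mul_add, Matrix.add_mul, Matrix.mul_smul, Matrix.smul_mul,
      Matrix.mul_one, Matrix.one_mul, smul_add]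
    rw [hVtV, Matrix.mul_one]
  have hconj_mul : ∀ d d' : Fin n → ℝ, (∀ j, d j * d' j = 1) →
      (Vᵀ * Matrix.diagonal d * V) * (Vᵀ * Matrix.diagonal d' * V) = 1 := by
    intro d d' h
    have hdd' : Matrix.diagonal d * Matrix.diagonal d' = 1 := by
      rw [Matrix.diagonal_mul_diagonal, show (fun i => d i * d' i) = fun _ : Fin n => (1:ℝ)
        from funext h, Matrix.diagonal_one]
    calc (Vᵀ * Matrix.diagonal d * V) * (Vᵀ * Matrix.diagonal d' * V)
        = Vᵀ * (Matrix.diagonal d * (V * (Vᵀ * (Matrix.diagonal d' * V)))) := by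
          simp only [Matrix.mul_assoc]
      _ = Vᵀ * (Matrix.diagonal d * (Matrix.diagonal d' * V)) := by rw [mcancel hVVt]
      _ = Vᵀ * V := by rw [mcancel hdd']
      _ = 1 := hVtV
  have hsw : ∀ P Q : Matrix (Fin n) (Fin n) ℝ, P * Q = 1 →
      (Lᵀ * P * L) * (L⁻¹ * Q * (L⁻¹)ᵀ) = 1 := by
    intro P Q h
    calc (Lᵀ * P * L) * (L⁻¹ * Q * (L⁻¹)ᵀ)
        = Lᵀ * (P * (L * (L⁻¹ * (Q * (L⁻¹)ᵀ)))) := by simp only [Matrix.mul_assoc]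
      _ = Lᵀ * (P * (Q * (L⁻¹)ᵀ)) := by rw [mcancel hLinv]
      _ = Lᵀ * (P * Q * (L⁻¹)ᵀ) := by rw [Matrix.mul_assoc]
      _ = 1 := by rw [h, Matrix.one_mul, hLtinv]
  have hsw' : ∀ P Q : Matrix (Fin n) (Fin n) ℝ, P * Q = 1 →
      (L⁻¹ * P * (L⁻¹)ᵀ) * (Lᵀ * Q * L) = 1 := by
    intro P Q h
    calc (L⁻¹ * P * (L⁻¹)ᵀ) * (Lᵀ * Q * L)
        = L⁻¹ * (P * ((L⁻¹)ᵀ * (Lᵀ * (Q * L)))) := by simp only [Matrix.mul_assoc]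
      _ = L⁻¹ * (P * (Q * L)) := by rw [mcancel hinvLt]
      _ = L⁻¹ * (P * Q * L) := by rw [Matrix.mul_assoc]
      _ = 1 := by rw [h, Matrix.one_mul, hinvL]
  have hPP' := hconj_mul dD (fun j => (dD j)⁻¹) (fun j => mul_inv_cancel₀ (hdDpos j).ne')
  set Wc : Matrix (Fin n) (Fin n) ℝ :=
    L⁻¹ * (Vᵀ * Matrix.diagonal (fun j => (dD j)⁻¹) * V) * (L⁻¹)ᵀ with hWc
  have hMW : (μ • (Aᵀ * A) + σ • (Lᵀ * L)) * Wc = 1 := by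
    rw [hMmat]; exact hsw _ _ hPP'
  have hGcond : Γcond = Wc := by rw [hΓcond]; exact Matrix.inv_eq_right_inv hMW
  have hGcondinv : Γcond⁻¹ = Lᵀ * (Vᵀ * Matrix.diagonal dD * V) * L := by
    rw [hGcond]
    exact Matrix.inv_eq_right_inv
      (hsw' _ _ (hconj_mul _ dD (fun j => inv_mul_cancel₀ (hdDpos j).ne')))
  have hinner : σ • (1 : Matrix (Fin n) (Fin n) ℝ) +
      μ • (∑ j ∈ Finset.univ.filter (fun j : Fin n => (j:ℕ) < k), lam j • vecMulVec (v j) (v j))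
      = Vᵀ * Matrix.diagonal dK * V := by
    rw [hfilt]
    have hd2 : Matrix.diagonal dK
        = μ • Matrix.diagonal (fun j : Fin n => if (j:ℕ) < k then lam j else 0)
          + σ • (1 : Matrix (Fin n) (Fin n) ℝ) := by
      ext i j
      by_cases h : i = j
      · subst h
        simp only [Matrix.diagonal_apply_eq, Matrix.add_apply, Matrix.smul_apply,
          Matrix.one_apply_eq, smul_eq_mul, hdK, mul_one]
        split <;> ring
      · simp [Matrix.diagonal_apply, Matrix.one_apply, h]
    rw [hd2]
    simp only [Matrix.mul_add, Matrix.add_mul, Matrix.mul_smul, Matrix.smul_mul,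
      Matrix.mul_one, Matrix.one_mul, smul_add]
    rw [hVtV]
    abel
  have hinnerinv : (σ • (1 : Matrix (Fin n) (Fin n) ℝ) +
      μ • (∑ j ∈ Finset.univ.filter (fun j : Fin n => (j:ℕ) < k),
        lam j • vecMulVec (v j) (v j)))⁻¹
      = Vᵀ * Matrix.diagonal (fun j => (dK j)⁻¹) * V := by
    rw [hinner]
    exact Matrix.inv_eq_right_inv
      (hconj_mul dK _ (fun j => mul_inv_cancel₀ (hdKpos j).ne'))
  have hGhat : Γhat = L⁻¹ * (Vᵀ * Matrix.diagonal (fun j => (dK j)⁻¹) * V) * (L⁻¹)ᵀ := by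
    rw [hΓhat, hinnerinv]
  have hGhatinv : Γhat⁻¹ = Lᵀ * (Vᵀ * Matrix.diagonal dK * V) * L := by
    rw [hGhat]
    exact Matrix.inv_eq_right_inv
      (hsw' _ _ (hconj_mul _ dK (fun j => inv_mul_cancel₀ (hdKpos j).ne')))
  have hdiff : Γcond⁻¹ - Γhat⁻¹ = Lᵀ * (Vᵀ * Matrix.diagonal dd * V) * L := by
    rw [hGcondinv, hGhatinv]
    have hDsub : Matrix.diagonal dD - Matrix.diagonal dK = Matrix.diagonal dd := by
      rw [Matrix.diagonal_sub]
      have : (fun i => dD i - dK i) = dd := funext fun j => by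
        simp only [hdD, hdK, hdd]; split <;> ring
      rw [this]
    rw [← hDsub]
    simp only [Matrix.mul_sub, Matrix.sub_mul]
  set T : Matrix (Fin n) (Fin n) ℝ := L⁻¹ * Vᵀ with hT
  have hTdetval : |T.det| = |L.det|⁻¹ := by
    rw [hT, Matrix.det_mul, Matrix.det_transpose, Matrix.det_nonsing_inv,
      Ring.inverse_eq_inv', abs_mul, habsdetV, mul_one, abs_inv]
  have hTdet : T.det ≠ 0 := by
    intro h
    rw [h, abs_zero] at hTdetval
    exact (inv_ne_zero (abs_ne_zero.mpr hLdet)) hTdetval.symm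
  have hconjT : ∀ E : Matrix (Fin n) (Fin n) ℝ, Tᵀ * (Lᵀ * (Vᵀ * E * V) * L) * T = E := by
    intro E
    have hTt : Tᵀ = V * (L⁻¹)ᵀ := by
      rw [hT, Matrix.transpose_mul, Matrix.transpose_transpose]
    calc Tᵀ * (Lᵀ * (Vᵀ * E * V) * L) * T
        = V * ((L⁻¹)ᵀ * (Lᵀ * (Vᵀ * (E * (V * (L * (L⁻¹ * Vᵀ))))))) := by
          rw [hTt, hT]; simp only [Matrix.mul_assoc]
      _ = V * ((L⁻¹)ᵀ * (Lᵀ * (Vᵀ * (E * (V * Vᵀ))))) := by rw [mcancel hLinv]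
      _ = V * ((L⁻¹)ᵀ * (Lᵀ * (Vᵀ * E))) := by rw [hVVt, Matrix.mul_one]
      _ = V * (Vᵀ * E) := by rw [mcancel hinvLt]
      _ = E := mcancel hVVt E
  -- vector level
  set c : Fin n → ℝ := V *ᵥ ((L⁻¹)ᵀ *ᵥ (Aᵀ *ᵥ b)) with hc
  have hcval : ∀ j, c j = b ⬝ᵥ (A *ᵥ (L⁻¹ *ᵥ v j)) := by
    intro j
    have h1 : c j = v j ⬝ᵥ ((L⁻¹)ᵀ *ᵥ (Aᵀ *ᵥ b)) := rfl
    rw [h1, Matrix.mulVec_mulVec, ← Matrix.transpose_mul, Matrix.dotProduct_mulVec,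
      Matrix.vecMul_transpose, dotProduct_comm, ← Matrix.mulVec_mulVec]
  set yhat : Fin n → ℝ := fun j => μ * ((dK j)⁻¹ * c j) with hyhat
  have hxhatT : xhat = T *ᵥ yhat := by
    have hyv : yhat = μ • (Matrix.diagonal (fun j => (dK j)⁻¹) *ᵥ c) := by
      funext j
      simp [hyhat, Matrix.mulVec_diagonal]
    rw [hxhat, hGhat, hyv, hc, hT, Matrix.mulVec_smul]
    congr 1
    simp only [Matrix.mulVec_mulVec, Matrix.mul_assoc]
  have hq1 : ∀ y : Fin n → ℝ,
      (T *ᵥ y) ⬝ᵥ ((Γcond⁻¹ - Γhat⁻¹) *ᵥ (T *ᵥ y)) = ∑ j, dd j * (y j)^2 := by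
    intro y
    rw [hdiff, quadform, hconjT, diagquad]
  have hq2 : ∀ y : Fin n → ℝ,
      ((T *ᵥ y) - xhat) ⬝ᵥ (Γhat⁻¹ *ᵥ ((T *ᵥ y) - xhat))
        = ∑ j, dK j * (y j - yhat j)^2 := by
    intro y
    rw [hxhatT, ← Matrix.mulVec_sub, hGhatinv, quadform, hconjT, diagquad]
    rfl
  have hGhdet : Γhat.det = ((L.det)^2)⁻¹ * (∏ j, (dK j)⁻¹) := by
    simp only [hGhat, Matrix.det_mul, Matrix.det_transpose, Matrix.det_nonsing_inv,
      Ring.inverse_eq_inv', Matrix.det_diagonal]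
    rw [sq, mul_inv]
    linear_combination ((L.det)⁻¹ * (L.det)⁻¹ * ∏ j, (dK j)⁻¹) * hdetV2
  have hGhdetpos : 0 < Γhat.det := by
    rw [hGhdet]
    have h1 : (0:ℝ) < ((L.det)^2)⁻¹ := by positivity
    have h2 : (0:ℝ) < ∏ j, (dK j)⁻¹ :=
      Finset.prod_pos fun j _ => inv_pos.mpr (hdKpos j)
    positivity
  -- continuity helpers
  have hcontquad : ∀ (M : Matrix (Fin n) (Fin n) ℝ) (u : Fin n → ℝ),
      Continuous fun z : Fin n → ℝ => (z - u) ⬝ᵥ (M *ᵥ (z - u)) := by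
    intro M u
    have h1 : Continuous fun z : Fin n → ℝ => z - u := continuous_id.sub continuous_const
    have h2 : Continuous fun z : Fin n → ℝ => z ⬝ᵥ (M *ᵥ z) := by
      simp only [dotProduct, Matrix.mulVec]
      exact continuous_finset_sum _ fun i _ =>
        (continuous_apply i).mul (continuous_finset_sum _ fun j _ =>
          continuous_const.mul (continuous_apply j))
    exact h2.comp h1
  have hcontG : Continuous fun z : Fin n → ℝ => w z * gfun z := by
    have hW : Continuous w := by
      have hwe : w = fun z => Real.exp (-(1/2) * (z ⬝ᵥ ((Γcond⁻¹ - Γhat⁻¹) *ᵥ z))) := funext hw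
      rw [hwe]
      exact Real.continuous_exp.comp (continuous_const.mul (by
        simpa [sub_zero] using hcontquad (Γcond⁻¹ - Γhat⁻¹) 0))
    have hg : Continuous gfun := by
      have hge : gfun = fun z => (2 * Real.pi) ^ (-(n : ℝ) / 2) * Γhat.det ^ (-(1:ℝ) / 2) *
          Real.exp (-(1/2) * ((z - xhat) ⬝ᵥ (Γhat⁻¹ *ᵥ (z - xhat)))) := funext hgfun
      rw [hge]
      exact continuous_const.mul (Real.continuous_exp.comp
        (continuous_const.mul (hcontquad Γhat⁻¹ xhat)))
    exact hW.mul hg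
  set Cg : ℝ := (2 * Real.pi) ^ (-(n:ℝ)/2) * Γhat.det ^ (-(1:ℝ)/2) with hCg
  set ee : Fin n → ℝ := fun j => -(1/2) * (dd j * dK j * (yhat j)^2 / (dD j)) with hee
  have hsumdk : ∀ j, dd j + dK j = dD j := fun j => by
    simp only [hdd, hdK, hdD]; split <;> ring
  have hpt : ∀ y : Fin n → ℝ, w (T *ᵥ y) * gfun (T *ᵥ y)
      = Cg * ∏ j, Real.exp (-(1/2) * (dd j * (y j)^2 + dK j * (y j - yhat j)^2)) := by
    intro y
    rw [hw, hgfun, hq1 y, hq2 y, ← Real.exp_sum]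
    rw [show ∀ (S1 S2 : ℝ), Real.exp (-(1/2)*S1) * (Cg * Real.exp S2)
        = Cg * Real.exp (-(1/2)*S1 + S2) from fun S1 S2 => by rw [Real.exp_add]; ring]
    congr 2
    rw [Finset.mul_sum, Finset.mul_sum, ← Finset.sum_add_distrib]
    exact Finset.sum_congr rfl fun j _ => by ring
  have hprodint : (∫ y : Fin n → ℝ,
        ∏ j, Real.exp (-(1/2) * (dd j * (y j)^2 + dK j * (y j - yhat j)^2)))
      = ∏ j, (Real.sqrt (2*Real.pi/(dD j)) * Real.exp (ee j)) := by
    rw [MeasureTheory.volume_pi, MeasureTheory.integral_fintype_prod_eq_prod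
      (fun j t => Real.exp (-(1/2) * (dd j * t^2 + dK j * (t - yhat j)^2)))]
    refine Finset.prod_congr rfl fun j _ => ?_
    rw [gauss1 _ _ _ (hddnn j) (hdKpos j), hsumdk j]
  -- scalar computations
  have h2pi : (0:ℝ) < 2 * Real.pi := by positivity
  have hA : (2*Real.pi) ^ (-(n:ℝ)/2) = ((Real.sqrt (2*Real.pi))^n)⁻¹ := by
    rw [Real.sqrt_eq_rpow, ← Real.rpow_natCast ((2*Real.pi)^(1/(2:ℝ))) n,
      ← Real.rpow_mul h2pi.le, ← Real.rpow_neg h2pi.le]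
    congr 1
    push_cast; ring
  have hsqrtdKpos : (0:ℝ) < ∏ j, Real.sqrt (dK j) :=
    Finset.prod_pos fun j _ => Real.sqrt_pos.mpr (hdKpos j)
  have hsqrtdDpos : (0:ℝ) < ∏ j, Real.sqrt (dD j) :=
    Finset.prod_pos fun j _ => Real.sqrt_pos.mpr (hdDpos j)
  have hB : Γhat.det ^ (-(1:ℝ)/2) = |L.det| * ∏ j, Real.sqrt (dK j) := by
    rw [show (-(1:ℝ)/2) = -(1/2 : ℝ) by norm_num, Real.rpow_neg hGhdetpos.le,
      ← Real.sqrt_eq_rpow, hGhdet]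
    rw [Real.sqrt_mul (by positivity), Real.sqrt_inv, Real.sqrt_sq_eq_abs,
      show (∏ j, (dK j)⁻¹) = (∏ j, dK j)⁻¹ from by rw [← Finset.prod_inv_distrib],
      Real.sqrt_inv, sqrt_prod _ _ (fun j _ => (hdKpos j).le), mul_inv, inv_inv, inv_inv]
  have hprodsplit : (∏ j, Real.sqrt (2*Real.pi/(dD j)))
      = (Real.sqrt (2*Real.pi))^n * (∏ j, Real.sqrt (dD j))⁻¹ := by
    calc (∏ j, Real.sqrt (2*Real.pi/(dD j)))
        = ∏ j : Fin n, (Real.sqrt (2*Real.pi) / Real.sqrt (dD j)) := by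
          exact Finset.prod_congr rfl fun j _ => Real.sqrt_div h2pi.le _
      _ = (∏ _j : Fin n, Real.sqrt (2*Real.pi)) / ∏ j, Real.sqrt (dD j) :=
          Finset.prod_div_distrib _ _
      _ = (Real.sqrt (2*Real.pi))^n * (∏ j, Real.sqrt (dD j))⁻¹ := by
          rw [Finset.prod_const, Finset.card_univ, Fintype.card_fin, div_eq_mul_inv]
  -- the key scalar identity
  have hsq2pow : (0:ℝ) < (Real.sqrt (2*Real.pi))^n := by positivity
  have key : |L.det|⁻¹ * (Cg * ∏ j, (Real.sqrt (2*Real.pi/(dD j)) * Real.exp (ee j)))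
      = Real.exp (∑ j, ee j) * ((∏ j, Real.sqrt (dK j)) / (∏ j, Real.sqrt (dD j))) := by
    rw [Finset.prod_mul_distrib, ← Real.exp_sum, hprodsplit, hCg, hA, hB]
    exact algkey _ _ _ _ _ (abs_ne_zero.mpr hLdet) (ne_of_gt hsq2pow)
  -- identify with N 1
  have hS2 : (∑ j, ee j) = -((μ ^ 2 / (2 * σ)) *
      ∑ j ∈ Finset.univ.filter (fun j : Fin n => k ≤ (j : ℕ)),
        (((1:ℕ) : ℝ) * μ * lam j / (((1:ℕ):ℝ) * μ * lam j + σ)) *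
          (b ⬝ᵥ (A *ᵥ (L⁻¹ *ᵥ v j))) ^ 2) := by
    rw [Finset.sum_filter, Finset.mul_sum, ← Finset.sum_neg_distrib]
    refine Finset.sum_congr rfl fun j _ => ?_
    by_cases h : (j:ℕ) < k
    · have h' : ¬ k ≤ (j:ℕ) := not_le.mpr h
      simp [hee, hdd, h, h']
    · have hk' : k ≤ (j:ℕ) := not_lt.mp h
      rw [← hcval j]
      simp only [hee, hdd, hdK, hdD, if_neg h, if_pos hk', hyhat, Nat.cast_one, one_mul]
      have h1 : σ + μ * lam j ≠ 0 := by nlinarith [hlam_nonneg j]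
      have h2 : μ * lam j + σ ≠ 0 := by nlinarith [hlam_nonneg j]
      field_simp
      ring
  have hPk : (∏ j, Real.sqrt (dK j)) / (∏ j, Real.sqrt (dD j))
      = (∏ j ∈ Finset.univ.filter (fun j : Fin n => k ≤ (j : ℕ)),
          Real.sqrt (1 + ((1:ℕ) : ℝ) * μ * lam j / σ))⁻¹ := by
    rw [Finset.prod_filter, ← Finset.prod_inv_distrib, ← Finset.prod_div_distrib]
    refine Finset.prod_congr rfl fun j _ => ?_
    by_cases h : (j:ℕ) < k
    · have h' : ¬ k ≤ (j:ℕ) := not_le.mpr h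
      simp only [hdK, hdD, if_pos h, if_neg h', inv_one]
      exact div_self (ne_of_gt (Real.sqrt_pos.mpr (by nlinarith [hlam_nonneg j])))
    · have hk' : k ≤ (j:ℕ) := not_lt.mp h
      simp only [hdK, hdD, if_neg h, if_pos hk', Nat.cast_one, one_mul]
      rw [show (1 + μ * lam j / σ) = (σ + μ * lam j)/σ from by field_simp,
        Real.sqrt_div (by nlinarith [hlam_nonneg j] : (0:ℝ) ≤ σ + μ * lam j), inv_div]
  -- main assembly
  intro x
  have hsplit : (∫ z : Fin n → ℝ, η z x * gfun z) = (w x)⁻¹ * ∫ z, w z * gfun z := by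
    have hz : ∀ z, η z x * gfun z = (w x)⁻¹ * (w z * gfun z) := fun z => by
      rw [hη, div_eq_mul_inv]; ring
    simp_rw [hz]
    exact MeasureTheory.integral_const_mul _ _
  rw [hsplit, cov T hTdet _ hcontG]
  have hinner2 : (∫ y : Fin n → ℝ, w (T *ᵥ y) * gfun (T *ᵥ y))
      = Cg * ∏ j, (Real.sqrt (2*Real.pi/(dD j)) * Real.exp (ee j)) := by
    calc (∫ y, w (T *ᵥ y) * gfun (T *ᵥ y))
        = ∫ y : Fin n → ℝ, Cg * ∏ j, Real.exp (-(1/2) * (dd j * (y j)^2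
            + dK j * (y j - yhat j)^2)) := by
          congr 1; funext y; exact hpt y
      _ = Cg * ∫ y : Fin n → ℝ, ∏ j, Real.exp (-(1/2) * (dd j * (y j)^2
            + dK j * (y j - yhat j)^2)) := MeasureTheory.integral_const_mul _ _
      _ = Cg * ∏ j, (Real.sqrt (2*Real.pi/(dD j)) * Real.exp (ee j)) := by rw [hprodint]
  rw [hinner2, hTdetval, ← mul_assoc, mul_assoc (w x)⁻¹, key, hS2, hPk, hN 1,
    Real.exp_neg, one_div, mul_inv]
  ring
end
end

section
/- For every positive integer ℓ, the matrix M := ℓ·Γ_cond^{-1} + (1 − ℓ)·Γ̂_cond^{-1} is invertible and satisfies M^{-1} − Γ̂_cond = −(1/σ) Σ_{j=k+1}^n (ℓμλ_j/(ℓμλ_j + σ)) L^{-1} v_j v_jᵀ L^{-T}. -/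
open Matrix MeasureTheory ProbabilityTheory Finset



lemma vmv_mul {n : ℕ} (a b c d : Fin n → ℝ) :
    vecMulVec a b * vecMulVec c d = (b ⬝ᵥ c) • vecMulVec a d := by
  ext i j
  simp only [Matrix.mul_apply, vecMulVec_apply, dotProduct, Matrix.smul_apply,
    smul_eq_mul, Finset.sum_mul]
  exact Finset.sum_congr rfl fun l _ => by ring

lemma sum_vmv_eq_one {n : ℕ} (v : Fin n → Fin n → ℝ)
    (horth : ∀ i j, v i ⬝ᵥ v j = if i = j then (1:ℝ) else 0) :
    ∑ j, vecMulVec (v j) (v j) = (1 : Matrix (Fin n) (Fin n) ℝ) := by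
  have hV : (Matrix.of v) * (Matrix.of v)ᵀ = 1 := by
    ext i j
    simpa [Matrix.mul_apply, dotProduct, Matrix.one_apply] using horth i j
  have hVt : (Matrix.of v)ᵀ * (Matrix.of v) = 1 := mul_eq_one_comm.mp hV
  ext i j
  rw [← hVt]
  simp only [Finset.sum_apply, Matrix.sum_apply, vecMulVec_apply, Matrix.mul_apply,
    Matrix.transpose_apply, Matrix.of_apply]

lemma sum_smul_vmv_mul {n : ℕ} (v : Fin n → Fin n → ℝ)
    (horth : ∀ i j, v i ⬝ᵥ v j = if i = j then (1:ℝ) else 0) (a b : Fin n → ℝ) :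
    (∑ j, a j • vecMulVec (v j) (v j)) * (∑ j, b j • vecMulVec (v j) (v j)) =
      ∑ j, (a j * b j) • vecMulVec (v j) (v j) := by
  rw [Finset.sum_mul_sum]
  have : ∀ i ∈ Finset.univ, ∀ j ∈ (Finset.univ : Finset (Fin n)),
      (a i • vecMulVec (v i) (v i)) * (b j • vecMulVec (v j) (v j)) =
      if i = j then (a i * b i) • vecMulVec (v i) (v i) else 0 := by
    intro i _ j _
    rw [Matrix.smul_mul, Matrix.mul_smul, vmv_mul, horth i j]
    split_ifs with h
    · subst h; rw [one_smul, smul_smul]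
    · rw [zero_smul, smul_zero, smul_zero]
  calc ∑ i, ∑ j, (a i • vecMulVec (v i) (v i)) * (b j • vecMulVec (v j) (v j))
      = ∑ i, ∑ j, if i = j then (a i * b i) • vecMulVec (v i) (v i) else 0 := by
        exact Finset.sum_congr rfl fun i hi => Finset.sum_congr rfl fun j hj => this i hi j hj
    _ = ∑ i, (a i * b i) • vecMulVec (v i) (v i) := by
        exact Finset.sum_congr rfl fun i _ => by simp

lemma inv_sum_smul_vmv {n : ℕ} (v : Fin n → Fin n → ℝ)
    (horth : ∀ i j, v i ⬝ᵥ v j = if i = j then (1:ℝ) else 0) (a : Fin n → ℝ)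
    (ha : ∀ j, a j ≠ 0) :
    (∑ j, a j • vecMulVec (v j) (v j))⁻¹ = ∑ j, (a j)⁻¹ • vecMulVec (v j) (v j) := by
  apply Matrix.inv_eq_right_inv
  rw [sum_smul_vmv_mul v horth]
  simp only [mul_inv_cancel₀ (ha _), one_smul]
  exact sum_vmv_eq_one v horth

lemma isUnit_det_sum_smul_vmv {n : ℕ} (v : Fin n → Fin n → ℝ)
    (horth : ∀ i j, v i ⬝ᵥ v j = if i = j then (1:ℝ) else 0) (a : Fin n → ℝ)
    (ha : ∀ j, a j ≠ 0) :
    IsUnit (∑ j, a j • vecMulVec (v j) (v j)).det := by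
  apply Matrix.isUnit_det_of_right_inverse (B := ∑ j, (a j)⁻¹ • vecMulVec (v j) (v j))
  rw [sum_smul_vmv_mul v horth]
  simp only [mul_inv_cancel₀ (ha _), one_smul]
  exact sum_vmv_eq_one v horth


noncomputable section

theorem stmt15
    (m n : ℕ) (hm : 0 < m) (hn : 0 < n)
    (A : Matrix (Fin m) (Fin n) ℝ) (L : Matrix (Fin n) (Fin n) ℝ) (hL : IsUnit L.det)
    (μ σ : ℝ) (hμ : 0 < μ) (hσ : 0 < σ)
    (v : Fin n → Fin n → ℝ) (lam : Fin n → ℝ)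
    (horth : ∀ i j, v i ⬝ᵥ v j = if i = j then (1 : ℝ) else 0)
    (hlam_nonneg : ∀ j, 0 ≤ lam j) (hlam_anti : Antitone lam)
    (hHdecomp : (L⁻¹)ᵀ * Aᵀ * A * L⁻¹ = ∑ j, lam j • vecMulVec (v j) (v j))
    (k : ℕ) (hk : k ≤ n)
    (Γcond : Matrix (Fin n) (Fin n) ℝ)
    (hΓcond : Γcond = (μ • (Aᵀ * A) + σ • (Lᵀ * L))⁻¹)
    (Γhat : Matrix (Fin n) (Fin n) ℝ)
    (hΓhat : Γhat = L⁻¹ * (σ • (1 : Matrix (Fin n) (Fin n) ℝ) +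
        μ • ∑ j ∈ Finset.univ.filter (fun j : Fin n => (j : ℕ) < k),
          lam j • vecMulVec (v j) (v j))⁻¹ * (L⁻¹)ᵀ)
    :
    ∀ ℓ : ℕ, 0 < ℓ →
      IsUnit ((ℓ : ℝ) • Γcond⁻¹ + (1 - (ℓ : ℝ)) • Γhat⁻¹).det ∧
      ((ℓ : ℝ) • Γcond⁻¹ + (1 - (ℓ : ℝ)) • Γhat⁻¹)⁻¹ - Γhat =
        -(1 / σ) • ∑ j ∈ Finset.univ.filter (fun j : Fin n => k ≤ (j : ℕ)),
          (((ℓ : ℝ) * μ * lam j) / ((ℓ : ℝ) * μ * lam j + σ)) •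
            (L⁻¹ * vecMulVec (v j) (v j) * (L⁻¹)ᵀ) := by
  intro ℓ hℓ
  have hℓ1 : (1:ℝ) ≤ (ℓ:ℝ) := by exact_mod_cast hℓ
  set P : Fin n → Matrix (Fin n) (Fin n) ℝ := fun j => vecMulVec (v j) (v j) with hPdef
  set c : Fin n → ℝ := fun j => σ + μ * lam j with hcdef
  set t : Fin n → ℝ := fun j => σ + (if (j:ℕ) < k then μ * lam j else 0) with htdef
  set w : Fin n → ℝ := fun j => σ + (if (j:ℕ) < k then μ * lam j else (ℓ:ℝ) * μ * lam j)
    with hwdef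
  have hc0 : ∀ j, c j ≠ 0 := fun j => by
    have := hlam_nonneg j; simp only [hcdef]; positivity
  have ht0 : ∀ j, t j ≠ 0 := fun j => by
    have := hlam_nonneg j; simp only [htdef]; split_ifs <;> positivity
  have hw0 : ∀ j, w j ≠ 0 := fun j => by
    have h1 := hlam_nonneg j
    have h2 : (0:ℝ) ≤ (ℓ:ℝ) * μ * lam j := by positivity
    simp only [hwdef]; split_ifs <;> nlinarith
  have hLt : IsUnit Lᵀ.det := by rwa [Matrix.det_transpose]
  have hLL : L⁻¹ * L = 1 := Matrix.nonsing_inv_mul L hL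
  have hLL' : L * L⁻¹ = 1 := Matrix.mul_nonsing_inv L hL
  -- A^T A in diagonal form
  have hAtA : Lᵀ * (∑ j, lam j • P j) * L = Aᵀ * A := by
    rw [← hHdecomp, Matrix.transpose_nonsing_inv]
    calc Lᵀ * ((Lᵀ)⁻¹ * Aᵀ * A * L⁻¹) * L
        = (Lᵀ * (Lᵀ)⁻¹) * (Aᵀ * (A * (L⁻¹ * L))) := by simp only [Matrix.mul_assoc]
      _ = Aᵀ * A := by
          simp only [Matrix.mul_nonsing_inv _ hLt, hLL, Matrix.one_mul, Matrix.mul_one]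
  -- the matrix inside Γcond
  have hB : μ • (Aᵀ * A) + σ • (Lᵀ * L) = Lᵀ * (∑ j, c j • P j) * L := by
    rw [← hAtA]
    have h1 : σ • (Lᵀ * L) = Lᵀ * (σ • (1 : Matrix (Fin n) (Fin n) ℝ)) * L := by
      rw [Matrix.mul_smul, Matrix.smul_mul, mul_one]
    have h2 : μ • (Lᵀ * (∑ j, lam j • P j) * L) = Lᵀ * (μ • ∑ j, lam j • P j) * L := by
      rw [Matrix.mul_smul, Matrix.smul_mul]
    rw [h1, h2, ← Matrix.add_mul, ← Matrix.mul_add]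
    congr 2
    rw [← sum_vmv_eq_one v horth, Finset.smul_sum, Finset.smul_sum, ← Finset.sum_add_distrib]
    refine Finset.sum_congr rfl fun j _ => ?_
    show μ • lam j • P j + σ • P j = c j • P j
    rw [smul_smul, ← add_smul]
    congr 1
    simp only [hcdef]; ring
  have hBdet : IsUnit (μ • (Aᵀ * A) + σ • (Lᵀ * L)).det := by
    rw [hB, Matrix.det_mul, Matrix.det_mul]
    exact (hLt.mul (isUnit_det_sum_smul_vmv v horth c hc0)).mul hL
  have hΓcondinv : Γcond⁻¹ = Lᵀ * (∑ j, c j • P j) * L := by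
    rw [hΓcond, Matrix.nonsing_inv_nonsing_inv _ hBdet, hB]
  -- the matrix inside Γhat
  have hBhat : σ • (1 : Matrix (Fin n) (Fin n) ℝ) +
      μ • ∑ j ∈ Finset.univ.filter (fun j : Fin n => (j : ℕ) < k), lam j • P j
      = ∑ j, t j • P j := by
    rw [Finset.sum_filter, ← sum_vmv_eq_one v horth, Finset.smul_sum, Finset.smul_sum,
      ← Finset.sum_add_distrib]
    refine Finset.sum_congr rfl fun j _ => ?_
    show σ • P j + μ • (if (j:ℕ) < k then lam j • P j else 0) = t j • P j
    simp only [htdef]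
    split_ifs with h
    · rw [smul_smul, ← add_smul]
    · rw [smul_zero, add_zero, add_zero]
  have hΓhat2 : Γhat = L⁻¹ * (∑ j, (t j)⁻¹ • P j) * (L⁻¹)ᵀ := by
    rw [hΓhat, hBhat, inv_sum_smul_vmv v horth t ht0]
  have hX : (∑ j, (t j)⁻¹ • P j)⁻¹ = ∑ j, t j • P j := by
    rw [inv_sum_smul_vmv v horth _ (fun j => inv_ne_zero (ht0 j))]
    simp only [inv_inv]
    rfl
  have hΓhatinv : Γhat⁻¹ = Lᵀ * (∑ j, t j • P j) * L := by
    rw [hΓhat2, Matrix.mul_inv_rev, Matrix.mul_inv_rev, hX,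
      Matrix.transpose_nonsing_inv, Matrix.nonsing_inv_nonsing_inv _ hLt,
      Matrix.nonsing_inv_nonsing_inv _ hL, Matrix.mul_assoc]
  -- the combined matrix M
  have hM : (ℓ : ℝ) • Γcond⁻¹ + (1 - (ℓ : ℝ)) • Γhat⁻¹ = Lᵀ * (∑ j, w j • P j) * L := by
    rw [hΓcondinv, hΓhatinv]
    have h1 : ∀ (a : ℝ) (X : Matrix (Fin n) (Fin n) ℝ),
        a • (Lᵀ * X * L) = Lᵀ * (a • X) * L := fun a X => by
      rw [Matrix.mul_smul, Matrix.smul_mul]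
    rw [h1, h1, ← Matrix.add_mul, ← Matrix.mul_add]
    congr 2
    rw [Finset.smul_sum, Finset.smul_sum, ← Finset.sum_add_distrib]
    refine Finset.sum_congr rfl fun j _ => ?_
    rw [smul_smul, smul_smul, ← add_smul]
    congr 1
    simp only [hcdef, htdef, hwdef]
    split_ifs <;> ring
  have hMdet : IsUnit ((ℓ : ℝ) • Γcond⁻¹ + (1 - (ℓ : ℝ)) • Γhat⁻¹).det := by
    rw [hM, Matrix.det_mul, Matrix.det_mul]
    exact (hLt.mul (isUnit_det_sum_smul_vmv v horth w hw0)).mul hL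
  refine ⟨hMdet, ?_⟩
  have hMinv : ((ℓ : ℝ) • Γcond⁻¹ + (1 - (ℓ : ℝ)) • Γhat⁻¹)⁻¹
      = L⁻¹ * (∑ j, (w j)⁻¹ • P j) * (L⁻¹)ᵀ := by
    rw [hM, Matrix.mul_inv_rev, Matrix.mul_inv_rev,
      inv_sum_smul_vmv v horth w hw0, ← Matrix.transpose_nonsing_inv, Matrix.mul_assoc]
  -- inner scalar identity
  have hfinal_inner : ∑ j, ((w j)⁻¹ - (t j)⁻¹) • P j
      = (-(1/σ)) • ∑ j ∈ Finset.univ.filter (fun j : Fin n => k ≤ (j : ℕ)),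
          (((ℓ : ℝ) * μ * lam j) / ((ℓ : ℝ) * μ * lam j + σ)) • P j := by
    rw [Finset.smul_sum, Finset.sum_filter]
    refine Finset.sum_congr rfl fun j _ => ?_
    by_cases h : k ≤ (j : ℕ)
    · have hjk : ¬ ((j : ℕ) < k) := not_lt.mpr h
      simp only [hwdef, htdef, if_neg hjk, if_pos h, add_zero, smul_smul]
      congr 1
      have h1 := hlam_nonneg j
      have h2 : (0:ℝ) ≤ (ℓ:ℝ) * μ * lam j := by positivity
      have h3 : (ℓ:ℝ) * μ * lam j + σ ≠ 0 := by nlinarith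
      rw [neg_mul, div_mul_div_comm, one_mul, mul_comm σ ((ℓ:ℝ) * μ * lam j + σ),
        ← neg_div, add_comm σ ((ℓ:ℝ) * μ * lam j), inv_sub_inv h3 hσ.ne']
      · congr 1
        ring
    · have hjk : (j : ℕ) < k := not_le.mp h
      simp only [hwdef, htdef, if_pos hjk, if_neg h, sub_self, zero_smul]
  calc ((ℓ : ℝ) • Γcond⁻¹ + (1 - (ℓ : ℝ)) • Γhat⁻¹)⁻¹ - Γhat
      = L⁻¹ * (∑ j, ((w j)⁻¹ - (t j)⁻¹) • P j) * (L⁻¹)ᵀ := by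
        rw [hMinv, hΓhat2]
        have : ∑ j, ((w j)⁻¹ - (t j)⁻¹) • P j
            = (∑ j, (w j)⁻¹ • P j) - (∑ j, (t j)⁻¹ • P j) := by
          rw [← Finset.sum_sub_distrib]
          exact Finset.sum_congr rfl fun j _ => by rw [sub_smul]
        rw [this, Matrix.mul_sub, Matrix.sub_mul]
    _ = -(1 / σ) • ∑ j ∈ Finset.univ.filter (fun j : Fin n => k ≤ (j : ℕ)),
          (((ℓ : ℝ) * μ * lam j) / ((ℓ : ℝ) * μ * lam j + σ)) •
            (L⁻¹ * P j * (L⁻¹)ᵀ) := by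
        rw [hfinal_inner]
        rw [Matrix.mul_smul, Matrix.smul_mul]
        congr 1
        rw [Matrix.mul_sum, Matrix.sum_mul]
        exact Finset.sum_congr rfl fun j _ => by
          rw [Matrix.mul_smul, Matrix.smul_mul]
end
end
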